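/- Let n ≥ 1 and let A be an n×n real matrix all of whose entries are strictly positive. Then the spectral radius σ(A) of A equals the maximum, over all vectors x ∈ ℝⁿ with x ≥ 0 entrywise and x ≠ 0, of min_{1 ≤ i ≤ n, xᵢ ≠ 0} (Ax)ᵢ / xᵢ; in particular this supremum is attained (by a Perron eigenvector of A). -/

import Mathlib

open Matrix Polynomial

namespace CWaux

variable {n : ℕ}

def Tset (A : Matrix (Fin n) (Fin n) ℝ) (x : Fin n → ℝ) : Set ℝ :=
  {y : ℝ | ∃ i : Fin n, x i ≠ 0 ∧ y = A.mulVec x i / x i}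

noncomputable def cw (A : Matrix (Fin n) (Fin n) ℝ) (x : Fin n → ℝ) : ℝ := sInf (Tset A x)

variable (A : Matrix (Fin n) (Fin n) ℝ)

lemma Tset_finite (x : Fin n → ℝ) : (Tset A x).Finite := by
  apply (Set.finite_range (fun i => A.mulVec x i / x i)).subset
  rintro y ⟨i, _, rfl⟩; exact ⟨i, rfl⟩

lemma Tset_nonempty {x : Fin n → ℝ} (hx : x ≠ 0) : (Tset A x).Nonempty := by
  obtain ⟨i, hi⟩ := Function.ne_iff.mp hx
  exact ⟨_, i, hi, rfl⟩

lemma cw_mem {x : Fin n → ℝ} (hx : x ≠ 0) : cw A x ∈ Tset A x :=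
  (Tset_nonempty A hx).csInf_mem (Tset_finite A x)

lemma mulVec_apply (x : Fin n → ℝ) (i : Fin n) : A.mulVec x i = ∑ j, A i j * x j := rfl

lemma mulVec_nonneg (hA : ∀ i j, 0 < A i j) {x : Fin n → ℝ} (hx0 : ∀ i, 0 ≤ x i) (i : Fin n) :
    0 ≤ A.mulVec x i := by
  rw [mulVec_apply]
  exact Finset.sum_nonneg fun j _ => mul_nonneg (hA i j).le (hx0 j)

lemma mulVec_pos (hA : ∀ i j, 0 < A i j) {x : Fin n → ℝ} (hx0 : ∀ i, 0 ≤ x i) (hx : x ≠ 0)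
    (i : Fin n) : 0 < A.mulVec x i := by
  obtain ⟨j, hj⟩ := Function.ne_iff.mp hx
  exact Finset.sum_pos' (fun j _ => mul_nonneg (hA i j).le (hx0 j))
    ⟨j, Finset.mem_univ j, mul_pos (hA i j) ((hx0 j).lt_of_ne (Ne.symm hj))⟩

lemma cw_pos (hA : ∀ i j, 0 < A i j) {x : Fin n → ℝ} (hx0 : ∀ i, 0 ≤ x i) (hx : x ≠ 0) :
    0 < cw A x := by
  obtain ⟨i, hi, heq⟩ := cw_mem A hx
  rw [heq]
  exact div_pos (mulVec_pos A hA hx0 hx i) ((hx0 i).lt_of_ne (Ne.symm hi))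

lemma cw_mul_le (hA : ∀ i j, 0 < A i j) {x : Fin n → ℝ} (hx0 : ∀ i, 0 ≤ x i) (hx : x ≠ 0)
    (i : Fin n) : cw A x * x i ≤ A.mulVec x i := by
  rcases eq_or_ne (x i) 0 with h | h
  · rw [h, mul_zero]; exact mulVec_nonneg A hA hx0 i
  · have hxi : 0 < x i := (hx0 i).lt_of_ne (Ne.symm h)
    have hle : cw A x ≤ A.mulVec x i / x i :=
      csInf_le (Tset_finite A x).bddBelow ⟨i, h, rfl⟩
    exact (le_div_iff₀ hxi).mp hle

lemma le_cw {x : Fin n → ℝ} {r : ℝ} (hx : x ≠ 0)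
    (h : ∀ i, x i ≠ 0 → r ≤ A.mulVec x i / x i) : r ≤ cw A x :=
  le_csInf (Tset_nonempty A hx) (by rintro y ⟨i, hi, rfl⟩; exact h i hi)

lemma ratio_smul (x : Fin n → ℝ) {c : ℝ} (hc : c ≠ 0) (i : Fin n) :
    A.mulVec (c • x) i / (c • x) i = A.mulVec x i / x i := by
  rw [Matrix.mulVec_smul]
  simp only [Pi.smul_apply, smul_eq_mul]
  rw [mul_div_mul_left _ _ hc]

lemma cw_smul {x : Fin n → ℝ} {c : ℝ} (hc : 0 < c) : cw A (c • x) = cw A x := by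
  unfold cw
  congr 1
  ext y
  constructor
  · rintro ⟨i, hi, rfl⟩
    have hxi : x i ≠ 0 := by
      intro h; apply hi; simp [h]
    exact ⟨i, hxi, ratio_smul A x hc.ne' i⟩
  · rintro ⟨i, hi, rfl⟩
    refine ⟨i, ?_, (ratio_smul A x hc.ne' i).symm⟩
    simp only [Pi.smul_apply, smul_eq_mul]
    exact mul_ne_zero hc.ne' hi

lemma cw_le_cw_mulVec (hA : ∀ i j, 0 < A i j) {x : Fin n → ℝ} (hx0 : ∀ i, 0 ≤ x i)
    (hx : x ≠ 0) : cw A x ≤ cw A (A.mulVec x) := by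
  have hz : ∀ i, 0 < A.mulVec x i := mulVec_pos A hA hx0 hx
  obtain ⟨i0, _⟩ := Function.ne_iff.mp hx
  have hzne : A.mulVec x ≠ 0 := fun h => (hz i0).ne' (congrFun h i0)
  apply le_cw A hzne
  intro i _
  rw [le_div_iff₀ (hz i)]
  calc cw A x * A.mulVec x i = ∑ j, A i j * (cw A x * x j) := by
        rw [mulVec_apply, Finset.mul_sum]
        exact Finset.sum_congr rfl fun j _ => mul_left_comm _ _ _
    _ ≤ ∑ j, A i j * A.mulVec x j :=
        Finset.sum_le_sum fun j _ =>
          mul_le_mul_of_nonneg_left (cw_mul_le A hA hx0 hx j) (hA i j).le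
    _ = A.mulVec (A.mulVec x) i := rfl

lemma cw_eq_inf' [Nonempty (Fin n)] {z : Fin n → ℝ} (hz : ∀ i, z i ≠ 0) :
    cw A z = Finset.univ.inf' Finset.univ_nonempty (fun i => A.mulVec z i / z i) := by
  rw [Finset.inf'_eq_csInf_image, Finset.coe_univ, Set.image_univ]
  unfold cw
  congr 1
  ext y
  simp only [Tset, Set.mem_setOf_eq, Set.mem_range]
  constructor
  · rintro ⟨i, _, rfl⟩
    exact ⟨i, rfl⟩
  · rintro ⟨i, rfl⟩
    exact ⟨i, hz i, rfl⟩

lemma continuousOn_finset_inf' {X ι : Type*} [TopologicalSpace X] {U : Set X} {f : ι → X → ℝ} :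
    ∀ (s : Finset ι) (hs : s.Nonempty), (∀ i ∈ s, ContinuousOn (f i) U) →
      ContinuousOn (fun x => s.inf' hs fun i => f i x) U := by
  intro s
  induction s using Finset.cons_induction with
  | empty => intro hs; exact absurd hs (by simp)
  | cons a s ha ih =>
    intro hs hf
    rcases s.eq_empty_or_nonempty with rfl | hs'
    · simpa using hf a (by simp)
    · have heq : (fun x => (Finset.cons a s ha).inf' hs fun i => f i x)
          = fun x => (f a x) ⊓ (s.inf' hs' fun i => f i x) := by
        funext x
        rw [Finset.inf'_cons hs']
      rw [heq]
      exact ContinuousOn.inf (hf a (by simp))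
        (ih hs' fun i hi => hf i (Finset.mem_cons_of_mem hi))

lemma continuous_mulVec_apply (i : Fin n) :
    Continuous (fun x : Fin n → ℝ => A.mulVec x i) := by
  simp only [mulVec_apply]
  exact continuous_finset_sum _ fun j _ => (continuous_const.mul (continuous_apply j))

lemma continuous_mulVec : Continuous (fun x : Fin n → ℝ => A.mulVec x) :=
  continuous_pi fun i => continuous_mulVec_apply A i

lemma scalar_mulVec {K : Type*} [Field K] (μ : K) (v : Fin n → K) :
    (Matrix.scalar (Fin n) μ) *ᵥ v = μ • v := by
  ext i
  rw [Matrix.scalar_apply, Matrix.mulVec_diagonal]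
  rfl

lemma isRoot_charpoly_iff {K : Type*} [Field K] (M : Matrix (Fin n) (Fin n) K) (μ : K) :
    M.charpoly.IsRoot μ ↔ ∃ v, v ≠ 0 ∧ M.mulVec v = μ • v := by
  have heval : M.charpoly.eval μ = (Matrix.scalar (Fin n) μ - M).det := by
    rw [Matrix.charpoly, _root_.eval_det, Matrix.matPolyEquiv_charmatrix,
      Polynomial.eval_sub, Polynomial.eval_X, Polynomial.eval_C]
  rw [Polynomial.IsRoot, heval, ← Matrix.exists_mulVec_eq_zero_iff]
  constructor
  · rintro ⟨v, hv, hmul⟩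
    refine ⟨v, hv, ?_⟩
    rw [Matrix.sub_mulVec, scalar_mulVec, sub_eq_zero] at hmul
    exact hmul.symm
  · rintro ⟨v, hv, hmul⟩
    refine ⟨v, hv, ?_⟩
    rw [Matrix.sub_mulVec, scalar_mulVec, hmul, sub_self]

/-- Existence of the Perron eigenvector via maximization on the simplex. -/
lemma exists_perron (hn : 1 ≤ n) (hA : ∀ i j, 0 < A i j) :
    ∃ y : Fin n → ℝ, (∀ i, 0 < y i) ∧ A.mulVec y = cw A y • y ∧
      ∀ x : Fin n → ℝ, (∀ i, 0 ≤ x i) → x ≠ 0 → cw A x ≤ cw A y := by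
  have hne : Nonempty (Fin n) := ⟨⟨0, by omega⟩⟩
  classical
  set Δ := stdSimplex ℝ (Fin n) with hΔ
  have hΔc : IsCompact Δ := isCompact_stdSimplex ℝ (Fin n)
  have hΔne : Δ.Nonempty := ⟨Pi.single (Classical.arbitrary (Fin n)) 1,
    single_mem_stdSimplex ℝ _⟩
  have hΔx0 : ∀ x ∈ Δ, ∀ i, 0 ≤ x i := fun x hx => hx.1
  have hΔxne : ∀ x ∈ Δ, x ≠ 0 := by
    intro x hx h
    have h2 := hx.2
    rw [h] at h2
    simp at h2
  set g : (Fin n → ℝ) → ℝ :=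
    fun x => Finset.univ.inf' Finset.univ_nonempty
      (fun i => A.mulVec (A.mulVec x) i / A.mulVec x i) with hg
  have hgeq : ∀ x ∈ Δ, g x = cw A (A.mulVec x) := by
    intro x hx
    rw [cw_eq_inf' A (fun i => (mulVec_pos A hA (hΔx0 x hx) (hΔxne x hx) i).ne')]
  have hgcont : ContinuousOn g Δ := by
    apply continuousOn_finset_inf'
    intro i _
    exact ContinuousOn.div
      (((continuous_mulVec_apply A i).comp (continuous_mulVec A)).continuousOn)
      ((continuous_mulVec_apply A i).continuousOn)
      (fun x hx => (mulVec_pos A hA (hΔx0 x hx) (hΔxne x hx) i).ne')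
  obtain ⟨u, huΔ, hmax⟩ := hΔc.exists_isMaxOn hΔne hgcont
  set y := A.mulVec u with hy
  have hy0 : ∀ i, 0 < y i := mulVec_pos A hA (hΔx0 u huΔ) (hΔxne u huΔ)
  have hyne : y ≠ 0 := fun h => (hy0 (Classical.arbitrary _)).ne' (congrFun h _)
  have hymax : ∀ x : Fin n → ℝ, (∀ i, 0 ≤ x i) → x ≠ 0 → cw A x ≤ cw A y := by
    intro x hx0 hxne
    obtain ⟨i0, hi0⟩ := Function.ne_iff.mp hxne
    have hs : 0 < ∑ i, x i :=
      Finset.sum_pos' (fun i _ => hx0 i)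
        ⟨i0, Finset.mem_univ i0, (hx0 i0).lt_of_ne (Ne.symm hi0)⟩
    set c := (∑ i, x i)⁻¹ with hcdef
    have hc : 0 < c := inv_pos.mpr hs
    have hx'Δ : c • x ∈ Δ := by
      refine ⟨fun i => mul_nonneg hc.le (hx0 i), ?_⟩
      simp only [Pi.smul_apply, smul_eq_mul]
      rw [← Finset.mul_sum, hcdef, inv_mul_cancel₀ hs.ne']
    calc cw A x = cw A (c • x) := (cw_smul A hc).symm
      _ ≤ cw A (A.mulVec (c • x)) :=
          cw_le_cw_mulVec A hA (fun i => mul_nonneg hc.le (hx0 i)) (hΔxne _ hx'Δ)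
      _ = g (c • x) := (hgeq _ hx'Δ).symm
      _ ≤ g u := hmax hx'Δ
      _ = cw A y := hgeq u huΔ
  refine ⟨y, hy0, ?_, hymax⟩
  by_contra hne2
  set r := cw A y with hrdef
  have hy0' : ∀ i, 0 ≤ y i := fun i => (hy0 i).le
  have hw0 : ∀ i, 0 ≤ (A.mulVec y - r • y) i := by
    intro i
    have := cw_mul_le A hA hy0' hyne i
    simp only [Pi.sub_apply, Pi.smul_apply, smul_eq_mul]
    linarith
  have hwne : A.mulVec y - r • y ≠ 0 := sub_ne_zero.mpr hne2
  set z := A.mulVec y with hzdef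
  have hz0 : ∀ i, 0 < z i := mulVec_pos A hA hy0' hyne
  have hzne : z ≠ 0 := fun h => (hz0 (Classical.arbitrary _)).ne' (congrFun h _)
  have hstrict : ∀ i, r * z i < A.mulVec z i := by
    intro i
    have hpos := mulVec_pos A hA hw0 hwne i
    rw [Matrix.mulVec_sub, Matrix.mulVec_smul] at hpos
    simp only [Pi.sub_apply, Pi.smul_apply, smul_eq_mul] at hpos
    linarith
  have hlt : r < cw A z := by
    obtain ⟨i, hi, heq⟩ := cw_mem A hzne
    rw [heq, lt_div_iff₀ (hz0 i)]
    exact hstrict i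
  have hle2 : cw A z ≤ r := hymax z (fun i => (hz0 i).le) hzne
  linarith

end CWaux

open CWaux in
/-- For an `n × n` real matrix `A` with strictly positive entries, the spectral radius of `A`
(the maximum modulus of the complex roots of the characteristic polynomial) is the maximum,
over nonnegative nonzero vectors `x`, of `min_{i, x i ≠ 0} (A x)_i / x_i`; in particular
the maximum is attained. (Collatz–Wielandt formula.) -/
theorem stmt0 (n : ℕ) (hn : 1 ≤ n) (A : Matrix (Fin n) (Fin n) ℝ)
    (hA : ∀ i j, 0 < A i j) :
    IsGreatest
      {r : ℝ | ∃ x : Fin n → ℝ, (∀ i, 0 ≤ x i) ∧ x ≠ 0 ∧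
        r = sInf {y : ℝ | ∃ i : Fin n, x i ≠ 0 ∧ y = A.mulVec x i / x i}}
      (sSup {r : ℝ | ∃ μ : ℂ, μ ∈ (A.map Complex.ofReal).charpoly.roots ∧
        r = ‖μ‖}) := by
  classical
  have hne : Nonempty (Fin n) := ⟨⟨0, by omega⟩⟩
  obtain ⟨y, hy0, hyeig, hymax⟩ := exists_perron A hn hA
  set r := cw A y with hr
  have hyne : y ≠ 0 := fun h => (hy0 (Classical.arbitrary _)).ne' (congrFun h _)
  have hy0' : ∀ i, 0 ≤ y i := fun i => (hy0 i).le
  have hrpos : 0 < r := cw_pos A hA hy0' hyne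
  have hroot : A.charpoly.IsRoot r := (isRoot_charpoly_iff A r).mpr ⟨y, hyne, hyeig⟩
  have hrootC : ((A.map Complex.ofReal).charpoly).IsRoot (r : ℂ) := by
    have hmap : (A.map Complex.ofReal).charpoly = A.charpoly.map Complex.ofRealHom :=
      Matrix.charpoly_map A Complex.ofRealHom
    rw [hmap]
    exact hroot.map
  have hCne : ((A.map Complex.ofReal).charpoly) ≠ 0 := (Matrix.charpoly_monic _).ne_zero
  set Rset := {r' : ℝ | ∃ μ : ℂ, μ ∈ (A.map Complex.ofReal).charpoly.roots ∧
    r' = ‖μ‖} with hRset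
  have hrmem : r ∈ Rset :=
    ⟨(r : ℂ), (Polynomial.mem_roots hCne).mpr hrootC, by
      rw [Complex.norm_real, Real.norm_eq_abs, abs_of_pos hrpos]⟩
  have hub : ∀ s ∈ Rset, s ≤ r := by
    rintro s ⟨μ, hμ, rfl⟩
    have hμroot : ((A.map Complex.ofReal).charpoly).IsRoot μ := (Polynomial.mem_roots hCne).mp hμ
    obtain ⟨v, hv, hveig⟩ := (isRoot_charpoly_iff (A.map Complex.ofReal) μ).mp hμroot
    set x : Fin n → ℝ := fun i => ‖v i‖ with hxdef
    have hx0 : ∀ i, 0 ≤ x i := fun i => norm_nonneg _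
    have hxne : x ≠ 0 := by
      obtain ⟨i, hi⟩ := Function.ne_iff.mp hv
      intro h
      exact hi (norm_eq_zero.mp (congrFun h i))
    have hkey : ∀ i, ‖μ‖ * x i ≤ A.mulVec x i := by
      intro i
      have h1 : ‖μ‖ * x i = ‖((A.map Complex.ofReal).mulVec v) i‖ := by
        rw [hveig]
        simp only [Pi.smul_apply, smul_eq_mul]
        exact (norm_mul μ (v i)).symm
      rw [h1]
      calc ‖∑ j, ((A i j : ℂ)) * v j‖
          ≤ ∑ j, ‖(A i j : ℂ) * v j‖ := norm_sum_le _ _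
        _ = ∑ j, A i j * x j := by
            refine Finset.sum_congr rfl fun j _ => ?_
            rw [norm_mul, Complex.norm_real, Real.norm_eq_abs, abs_of_pos (hA i j)]
        _ = A.mulVec x i := rfl
    have h2 : ‖μ‖ ≤ cw A x := by
      apply le_cw A hxne
      intro i hi
      rw [le_div_iff₀ ((hx0 i).lt_of_ne (Ne.symm hi))]
      exact hkey i
    exact h2.trans (hymax x hx0 hxne)
  have hsup : sSup Rset = r := le_antisymm (csSup_le ⟨r, hrmem⟩ hub) (le_csSup ⟨r, hub⟩ hrmem)
  rw [hsup]
  constructor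
  · exact ⟨y, hy0', hyne, rfl⟩
  · rintro s ⟨x, hx0, hxne, rfl⟩
    exact hymax x hx0 hxne
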